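/- arXiv:2104.13709 — 6 statements merged into one kernel-verified Lean document; each statement's English description precedes it below -/
import Mathlib

section
/- Let d ≥ 4 and η, g ≥ 0 be integers, and set m = (d-1)(d-2)/2 - η - g, assuming m > 0. Define R_m : Z → Z by R_m(k) = 0 for k ≤ 0, R_m(k) = ⌊(k+1)/2⌋ for 0 < k < 2m+1, and R_m(k) = k - m for k ≥ 2m+1. Then R_m(kd + 1 - η) ≤ (k+1)(k+2)/2 + g for all k ∈ {1,...,d-2} if and only if 2g + η ≥ (d²-6d+5)/4 when d is odd, and 2g + η ≥ (d²-6d+4)/4 when d is even. -/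
/-- The semigroup counting function `R_m` of the torus knot `T(2,2m+1)`. -/
def Rm (m k : ℤ) : ℤ :=
  if k ≤ 0 then 0 else if k < 2 * m + 1 then (k + 1) / 2 else k - m

lemma fwd_odd (t η g m s c : ℤ) (ht2 : 2 ≤ t) (hη : 0 ≤ η) (hg : 0 ≤ g)
    (hm : m = 2*s - t - η - g) (hs0 : 0 ≤ s) (hs2 : 2*t ≤ s) (hpar : s + t = c + c)
    (hk : Rm m (2*s - t - η) ≤ (s + t) / 2 + g) :
    2*g + η ≥ s - 2*t := by
  simp only [Rm] at hk; split_ifs at hk <;> omega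

lemma fwd_even (t η g m s c : ℤ) (ht2 : 2 ≤ t) (hη : 0 ≤ η) (hg : 0 ≤ g)
    (hm : m = 2*s - 3*t + 1 - η - g) (hs0 : 0 ≤ s) (hs2 : 2*t ≤ s) (hpar : s + t = c + c)
    (hk : Rm m (2*s - 2*t + 1 - η) ≤ (s + t) / 2 + g) :
    2*g + η ≥ s - 3*t + 1 := by
  simp only [Rm] at hk; split_ifs at hk <;> omega

lemma back_odd (t k η g m c p q s : ℤ) (h1 : 1 ≤ k)
    (hm : m = 2*s - t - η - g) (hg : 0 ≤ g)
    (hco : 2*g + η ≥ s - 2*t)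
    (hpar : q + k = c + c) (hq0 : 0 ≤ q)
    (key1 : 0 ≤ 4*s - 8*p + 4*q - 8*t + 8*k + 4)
    (key2 : 0 ≤ 4*s - 4*p - 2*t + q + k) :
    Rm m (2*p + k + 1 - η) ≤ (q + 3*k + 2) / 2 + g := by
  simp only [Rm]; split_ifs <;> omega

lemma back_even (t k η g m c p q s : ℤ) (h1 : 1 ≤ k)
    (hm : m = 2*s - 3*t + 1 - η - g) (hg : 0 ≤ g)
    (hce : 2*g + η ≥ s - 3*t + 1)
    (hpar : q + k = c + c) (hq0 : 0 ≤ q)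
    (key1 : 1 ≤ 4*s - 8*p - 12*t + 4*q + 12*k + 9)
    (key2 : 0 ≤ 4*s - 4*p - 6*t + q + 3*k + 2) :
    Rm m (2*p + 1 - η) ≤ (q + 3*k + 2) / 2 + g := by
  simp only [Rm]; split_ifs <;> omega

/-- For `d ≥ 4`, `η, g ≥ 0` and `m = (d-1)(d-2)/2 - η - g > 0`,
the inequality `R_m(kd+1-η) ≤ (k+1)(k+2)/2 + g` holds for all `k ∈ {1,…,d-2}`
iff `2g + η ≥ (d²-6d+5)/4` (d odd), resp. `2g + η ≥ (d²-6d+4)/4` (d even). -/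
theorem Rm_bound_iff (d η g m : ℤ) (hd : 4 ≤ d) (hη : 0 ≤ η) (hg : 0 ≤ g)
    (hm : m = (d - 1) * (d - 2) / 2 - η - g) (hm0 : 0 < m) :
    (∀ k : ℤ, 1 ≤ k → k ≤ d - 2 →
        Rm m (k * d + 1 - η) ≤ (k + 1) * (k + 2) / 2 + g) ↔
      ((Odd d → 2 * g + η ≥ (d ^ 2 - 6 * d + 5) / 4) ∧
       (Even d → 2 * g + η ≥ (d ^ 2 - 6 * d + 4) / 4)) := by
  constructor
  · intro h
    constructor
    · rintro ⟨t, ht⟩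
      subst ht
      have ht2 : 2 ≤ t := by omega
      have hm' : m = 2*(t*t) - t - η - g := by
        rw [hm, show (2*t+1-1)*(2*t+1-2) = 2*(2*t*t - t) from by ring,
          Int.mul_ediv_cancel_left _ two_ne_zero]
        ring
      obtain ⟨c, hc⟩ := Int.even_mul_succ_self t
      have hk := h (t - 1) (by omega) (by omega)
      rw [show (t-1)*(2*t+1) + 1 - η = 2*(t*t) - t - η from by ring,
        show ((t:ℤ)-1+1)*(t-1+2) = t*t + t from by ring] at hk
      rw [show ((2*t+1:ℤ))^2 - 6*(2*t+1) + 5 = 4*(t*t - 2*t) from by ring,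
        Int.mul_ediv_cancel_left _ (by norm_num : (4:ℤ) ≠ 0)]
      exact fwd_odd t η g m (t*t) c ht2 hη hg hm' (mul_self_nonneg t)
        (by nlinarith) (by linear_combination hc) hk
    · rintro ⟨t, ht⟩
      subst ht
      have ht2 : 2 ≤ t := by omega
      have hm' : m = 2*(t*t) - 3*t + 1 - η - g := by
        rw [hm, show (t+t-1)*(t+t-2) = 2*(2*t*t - 3*t + 1) from by ring,
          Int.mul_ediv_cancel_left _ two_ne_zero]
        ring
      obtain ⟨c, hc⟩ := Int.even_mul_succ_self t
      have hk := h (t - 1) (by omega) (by omega)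
      rw [show (t-1)*(t+t) + 1 - η = 2*(t*t) - 2*t + 1 - η from by ring,
        show ((t:ℤ)-1+1)*(t-1+2) = t*t + t from by ring] at hk
      rw [show ((t+t:ℤ))^2 - 6*(t+t) + 4 = 4*(t*t - 3*t + 1) from by ring,
        Int.mul_ediv_cancel_left _ (by norm_num : (4:ℤ) ≠ 0)]
      exact fwd_even t η g m (t*t) c ht2 hη hg hm' (mul_self_nonneg t)
        (by nlinarith) (by linear_combination hc) hk
  · intro hc k hk1 hk2
    obtain ⟨ho, he⟩ := hc
    rcases Int.even_or_odd d with ⟨t, ht⟩ | ⟨t, ht⟩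
    · subst ht
      have hce := he ⟨t, rfl⟩
      rw [show ((t+t:ℤ))^2 - 6*(t+t) + 4 = 4*(t*t - 3*t + 1) from by ring,
        Int.mul_ediv_cancel_left _ (by norm_num : (4:ℤ) ≠ 0)] at hce
      have hm' : m = 2*(t*t) - 3*t + 1 - η - g := by
        rw [hm, show (t+t-1)*(t+t-2) = 2*(2*t*t - 3*t + 1) from by ring,
          Int.mul_ediv_cancel_left _ two_ne_zero]
        ring
      obtain ⟨c, hc⟩ := Int.even_mul_succ_self k
      rw [show k*(t+t) + 1 - η = 2*(k*t) + 1 - η from by ring,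
        show (k+1)*(k+2) = k*k + 3*k + 2 from by ring]
      refine back_even t k η g m c (k*t) (k*k) (t*t) hk1 hm' hg hce
        (by linear_combination hc) (mul_self_nonneg k) ?_ ?_
      · have h0 : (2*t - 2*k - 3 : ℤ) ≠ 0 := by omega
        rcases lt_or_gt_of_ne h0 with h | h <;> nlinarith
      · nlinarith [mul_nonneg (show (0:ℤ) ≤ t+t-k-1 by omega)
          (show (0:ℤ) ≤ t+t-k-2 by omega)]
    · subst ht
      have hco := ho ⟨t, rfl⟩
      rw [show ((2*t+1:ℤ))^2 - 6*(2*t+1) + 5 = 4*(t*t - 2*t) from by ring,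
        Int.mul_ediv_cancel_left _ (by norm_num : (4:ℤ) ≠ 0)] at hco
      have hm' : m = 2*(t*t) - t - η - g := by
        rw [hm, show (2*t+1-1)*(2*t+1-2) = 2*(2*t*t - t) from by ring,
          Int.mul_ediv_cancel_left _ two_ne_zero]
        ring
      obtain ⟨c, hc⟩ := Int.even_mul_succ_self k
      rw [show k*(2*t+1) + 1 - η = 2*(k*t) + k + 1 - η from by ring,
        show (k+1)*(k+2) = k*k + 3*k + 2 from by ring]
      refine back_odd t k η g m c (k*t) (k*k) (t*t) hk1 hm' hg hco
        (by linear_combination hc) (mul_self_nonneg k) ?_ ?_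
      · nlinarith [sq_nonneg (2*t - 2*k - 2 : ℤ)]
      · nlinarith [mul_nonneg (show (0:ℤ) ≤ 2*t-k by omega)
          (show (0:ℤ) ≤ 2*t-k-1 by omega)]
end

section
/- Let d ≥ 4, η, g ≥ 0, m = (d-1)(d-2)/2 - η - g > 0, and let R_m be as above. If 1 ≤ k ≤ d-2 and either kd + 1 - η ≥ 2m + 1 or kd + 1 - η ≤ 0, then R_m(kd + 1 - η) ≤ (k+1)(k+2)/2 + g. -/
/-- with `m = (d-1)(d-2)/2 - η - g > 0` and `1 ≤ k ≤ d-2`, if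
`kd+1-η ≥ 2m+1` or `kd+1-η ≤ 0`, then `R_m(kd+1-η) ≤ (k+1)(k+2)/2 + g`. -/
theorem Rm_bound_out_of_range (d η g m : ℤ) (hd : 4 ≤ d) (hη : 0 ≤ η)
    (hg : 0 ≤ g) (hm : m = (d - 1) * (d - 2) / 2 - η - g) (hm0 : 0 < m)
    (k : ℤ) (hk1 : 1 ≤ k) (hk2 : k ≤ d - 2)
    (hout : 2 * m + 1 ≤ k * d + 1 - η ∨ k * d + 1 - η ≤ 0) :
    Rm m (k * d + 1 - η) ≤ (k + 1) * (k + 2) / 2 + g := by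
  obtain ⟨a, ha⟩ : ∃ a, (d - 1) * (d - 2) = 2 * a := by
    rcases Int.even_mul_succ_self (d - 2) with ⟨a, ha⟩
    exact ⟨a, by linarith [ha]⟩
  obtain ⟨b, hb⟩ : ∃ b, (k + 1) * (k + 2) = 2 * b := by
    rcases Int.even_mul_succ_self (k + 1) with ⟨b, hb⟩
    exact ⟨b, by linarith [hb]⟩
  have ha' : (d - 1) * (d - 2) / 2 = a := by rw [ha]; exact Int.mul_ediv_cancel_left a (by norm_num)
  have hb' : (k + 1) * (k + 2) / 2 = b := by rw [hb]; exact Int.mul_ediv_cancel_left b (by norm_num)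
  rw [hm, ha'] at hm0 ⊢
  rw [hb']
  rcases hout with h | h
  · rw [hm, ha'] at h
    have hkd : 2 * b ≥ 2 * (k * d + 1) - 2 * a := by
      have : 0 ≤ (d - k - 1) * (d - k - 2) := mul_nonneg (by linarith) (by linarith)
      nlinarith [ha, hb]
    rw [Rm, if_neg (by linarith), if_neg (by linarith)]
    linarith
  · rw [Rm, if_pos h]
    nlinarith [hb]
end

section
/- Let n ≥ 2 and let S be the numerical semigroup generated by φ_{4n-2} and φ_{4n+2}, where φ denotes the Fibonacci sequence. Then S contains exactly 9 elements in the interval [0, 3φ_{4n}), namely 0, φ_{4n-2}, 2φ_{4n-2}, ..., 7φ_{4n-2}, and φ_{4n+2}. -/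
private lemma fib_expand (k : ℕ) :
    Nat.fib (k+6) = 2*Nat.fib (k+4) + Nat.fib (k+3) ∧
    Nat.fib (k+8) = 5*Nat.fib (k+4) + 3*Nat.fib (k+3) ∧
    Nat.fib (k+10) = 13*Nat.fib (k+4) + 8*Nat.fib (k+3) := by
  have h5 : Nat.fib (k+5) = Nat.fib (k+3) + Nat.fib (k+4) := Nat.fib_add_two
  have h6 : Nat.fib (k+6) = Nat.fib (k+4) + Nat.fib (k+5) := Nat.fib_add_two
  have h7 : Nat.fib (k+7) = Nat.fib (k+5) + Nat.fib (k+6) := Nat.fib_add_two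
  have h8 : Nat.fib (k+8) = Nat.fib (k+6) + Nat.fib (k+7) := Nat.fib_add_two
  have h9 : Nat.fib (k+9) = Nat.fib (k+7) + Nat.fib (k+8) := Nat.fib_add_two
  have h10 : Nat.fib (k+10) = Nat.fib (k+8) + Nat.fib (k+9) := Nat.fib_add_two
  omega

/-- for `n ≥ 2`, the numerical semigroup generated by `φ_{4n-2}`
and `φ_{4n+2}` has exactly 9 elements in `[0, 3φ_{4n})`, namely
`0, φ_{4n-2}, 2φ_{4n-2}, …, 7φ_{4n-2}` and `φ_{4n+2}`. -/
theorem fibonacci_semigroup_count (n : ℕ) (hn : 2 ≤ n) :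
    {x : ℕ | (∃ a b : ℕ, x = a * Nat.fib (4 * n - 2) + b * Nat.fib (4 * n + 2)) ∧
        x < 3 * Nat.fib (4 * n)}
      = (fun j => j * Nat.fib (4 * n - 2)) '' {j : ℕ | j ≤ 7} ∪ {Nat.fib (4 * n + 2)} ∧
    Set.ncard {x : ℕ |
        (∃ a b : ℕ, x = a * Nat.fib (4 * n - 2) + b * Nat.fib (4 * n + 2)) ∧
        x < 3 * Nat.fib (4 * n)} = 9 := by
  obtain ⟨m, rfl⟩ : ∃ m, n = m + 2 := ⟨n - 2, by omega⟩
  rw [show 4 * (m + 2) - 2 = 4*m+6 by omega, show 4 * (m + 2) + 2 = 4*m+10 by omega,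
    show 4 * (m + 2) = 4*m+8 by omega]
  obtain ⟨e6, e8, e10⟩ := fib_expand (4*m)
  have hc : 0 < Nat.fib (4*m+3) := Nat.fib_pos.2 (by omega)
  have hca : Nat.fib (4*m+3) < Nat.fib (4*m+4) := Nat.fib_lt_fib_succ (by omega)
  set F := Nat.fib (4*m+6) with hF
  set G := Nat.fib (4*m+10) with hG
  set M := 3 * Nat.fib (4*m+8) with hM
  -- key numeric facts
  have hF0 : 0 < F := by omega
  have hFG : F + G = M := by omega
  have h7 : 7 * F < M := by omega
  have h8 : M < 8 * F := by omega
  have hkey : {x : ℕ | (∃ a b : ℕ, x = a * F + b * G) ∧ x < M}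
      = (fun j => j * F) '' {j : ℕ | j ≤ 7} ∪ {G} := by
    ext x
    simp only [Set.mem_setOf_eq, Set.mem_union, Set.mem_image, Set.mem_singleton_iff]
    constructor
    · rintro ⟨⟨a, b, rfl⟩, hx⟩
      match b with
      | 0 =>
        left
        refine ⟨a, ?_, by ring⟩
        by_contra h
        have : 8 * F ≤ a * F := Nat.mul_le_mul_right F (by omega)
        omega
      | 1 =>
        right
        have : a = 0 := by
          by_contra h
          have : 1 * F ≤ a * F := Nat.mul_le_mul_right F (by omega)
          omega
        subst this; simp
      | (b + 2) =>
        exfalso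
        have : 2 * G ≤ (b + 2) * G := Nat.mul_le_mul_right G (by omega)
        omega
    · rintro (⟨j, hj, rfl⟩ | rfl)
      · have : j * F ≤ 7 * F := Nat.mul_le_mul_right F hj
        exact ⟨⟨j, 0, by ring⟩, by omega⟩
      · exact ⟨⟨0, 1, by ring⟩, by omega⟩
  refine ⟨hkey, ?_⟩
  rw [hkey]
  have hset : (fun j => j * F) '' {j : ℕ | j ≤ 7} ∪ {G}
      = (({0, F, 2*F, 3*F, 4*F, 5*F, 6*F, 7*F, G} : Finset ℕ) : Set ℕ) := by
    ext x
    simp only [Set.mem_union, Set.mem_image, Set.mem_setOf_eq, Set.mem_singleton_iff,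
      Finset.coe_insert, Set.mem_insert_iff, Finset.coe_singleton]
    constructor
    · rintro (⟨j, hj, rfl⟩ | rfl)
      · interval_cases j <;> simp
      · tauto
    · rintro (rfl | rfl | rfl | rfl | rfl | rfl | rfl | rfl | rfl)
      · exact Or.inl ⟨0, by omega, by ring⟩
      · exact Or.inl ⟨1, by omega, by ring⟩
      · exact Or.inl ⟨2, by omega, by ring⟩
      · exact Or.inl ⟨3, by omega, by ring⟩
      · exact Or.inl ⟨4, by omega, by ring⟩
      · exact Or.inl ⟨5, by omega, by ring⟩
      · exact Or.inl ⟨6, by omega, by ring⟩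
      · exact Or.inl ⟨7, by omega, by ring⟩
      · exact Or.inr rfl
  rw [hset, Set.ncard_coe_finset]
  repeat rw [Finset.card_insert_of_notMem (by simp; omega)]
  simp
end

section
/- Let R_n be the semigroup counting function of the torus knot T(2,2n+1), i.e. R_n(k) = 0 for k ≤ 0, R_n(k) = ⌊(k+1)/2⌋ for 0 < k < 2n+1, and R_n(k) = k - n for k ≥ 2n+1. Then the infimal convolution R_a ⋄ R_b equals R_{a+b}. -/
/-- the infimal convolution `R_a ⋄ R_b` equals `R_{a+b}`:
for every `m`, `R_{a+b}(m)` is the least element of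
`{R_a(i) + R_b(m-i) : i ∈ ℤ}`. -/
theorem Rm_infConvolution (a b : ℤ) (ha : 0 ≤ a) (hb : 0 ≤ b) (m : ℤ) :
    IsLeast {v : ℤ | ∃ i : ℤ, v = Rm a i + Rm b (m - i)} (Rm (a + b) m) := by
  constructor
  · rcases le_or_gt m 0 with hm | hm
    · exact ⟨0, by simp only [Rm]; split_ifs <;> omega⟩
    · rcases le_or_gt m (2 * a) with h | h
      · exact ⟨m, by simp only [Rm]; split_ifs <;> omega⟩
      · exact ⟨2 * a, by simp only [Rm]; split_ifs <;> omega⟩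
  · rintro v ⟨i, rfl⟩
    simp only [Rm]; split_ifs <;> omega
end

section
/- Let C = (C_1 → C_0) be a positive staircase complex over R = F_2[U,V] with generators x_0,...,x_{2n} of C_0 and y_1,...,y_{2n-1} of C_1 and differential ∂y_{2i+1} = U^{a_i}x_{2i} + V^{b_i}x_{2i+2} (a_i, b_i > 0). Then the homology H = C_0 / im(∂) is torsion-free as an R-module: if f ∈ R is a non-zero monomial and f·[x] = 0 in H, then [x] = 0 in H. -/
open MvPolynomial

/-- The ground ring `𝔽₂[U,V]` of link Floer theory, with `U = X 0`, `V = X 1`. -/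
noncomputable abbrev R2 := MvPolynomial (Fin 2) (ZMod 2)

/-- The differential of a positive staircase complex:
`∂ y_{2i+1} = U^{a i} x_{2i} + V^{b i} x_{2i+2}`. -/
noncomputable def stairDiff (n : ℕ) (a b : Fin n → ℕ) :
    (Fin n → R2) → (Fin (n + 1) → R2) := fun f =>
  ∑ i : Fin n, f i •
    ((Pi.single i.castSucc (X 0 ^ a i) + Pi.single i.succ (X 1 ^ b i) :
      Fin (n + 1) → R2))

lemma primeX0 : Prime (X 0 : R2) := by
  rw [← MulEquiv.prime_iff (finSuccEquiv (ZMod 2) 1).toMulEquiv]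
  have h : ((finSuccEquiv (ZMod 2) 1).toMulEquiv) (X 0) =
      (Polynomial.X : Polynomial (MvPolynomial (Fin 1) (ZMod 2))) := finSuccEquiv_X_zero
  rw [h]
  exact Polynomial.prime_X

lemma primeX1 : Prime (X 1 : R2) := by
  rw [← MulEquiv.prime_iff (renameEquiv (ZMod 2) (Equiv.swap (0 : Fin 2) 1)).toMulEquiv]
  have h : ((renameEquiv (ZMod 2) (Equiv.swap (0 : Fin 2) 1)).toMulEquiv) (X 1) = (X 0 : R2) := by
    simp [renameEquiv_apply, Equiv.swap_apply_right]
  rw [h]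
  exact primeX0

lemma not_X0_dvd_X1 : ¬ (X 0 : R2) ∣ X 1 := by
  simp

lemma not_X1_dvd_X0 : ¬ (X 1 : R2) ∣ X 0 := by
  simp

lemma stairDiff_apply (n : ℕ) (a b : Fin n → ℕ) (f : Fin n → R2) (k : Fin (n + 1)) :
    stairDiff n a b f k =
      (∑ i : Fin n, if k = i.castSucc then f i * X 0 ^ a i else 0)
    + (∑ i : Fin n, if k = i.succ then f i * X 1 ^ b i else 0) := by
  simp only [stairDiff, Finset.sum_apply, Pi.smul_apply, Pi.add_apply, Pi.single_apply,
    smul_eq_mul, mul_add, mul_ite, mul_zero]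
  rw [Finset.sum_add_distrib]

lemma stairDiff_smul (n : ℕ) (a b : Fin n → ℕ) (c : R2) (f : Fin n → R2) :
    stairDiff n a b (c • f) = c • stairDiff n a b f := by
  unfold stairDiff
  rw [Finset.smul_sum]
  refine Finset.sum_congr rfl fun i _ => ?_
  rw [Pi.smul_apply, smul_eq_mul, mul_smul]

lemma stepU (n : ℕ) (a b : Fin n → ℕ) (ha : ∀ i, 0 < a i)
    (x : Fin (n + 1) → R2)
    (hx : (X 0 : R2) • x ∈ Set.range (stairDiff n a b)) :
    x ∈ Set.range (stairDiff n a b) := by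
  obtain ⟨f, hf⟩ := hx
  have hdvd : ∀ m : Fin n, (X 0 : R2) ∣ f m := by
    intro m
    have h := congrFun hf m.succ
    rw [stairDiff_apply] at h
    have hS2 : (∑ i : Fin n, if m.succ = i.succ then f i * X 1 ^ b i else 0)
        = f m * X 1 ^ b m := by
      rw [Finset.sum_eq_single m]
      · rw [if_pos rfl]
      · intro i _ hi
        rw [if_neg (fun hh => hi (Fin.succ_injective _ hh.symm))]
      · simp
    have hS1 : (X 0 : R2) ∣ ∑ i : Fin n, if m.succ = i.castSucc then f i * X 0 ^ a i else 0 :=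
      Finset.dvd_sum fun i _ => by
        split
        · exact ((dvd_pow_self (X 0 : R2) (ha i).ne')).mul_left _
        · exact dvd_zero _
    have hd : (X 0 : R2) ∣ f m * X 1 ^ b m := by
      have heq : f m * X 1 ^ b m =
          (X 0 : R2) * x m.succ -
            (∑ i : Fin n, if m.succ = i.castSucc then f i * X 0 ^ a i else 0) := by
        rw [hS2] at h
        simp only [Pi.smul_apply, smul_eq_mul] at h
        rw [← h]
        ring
      rw [heq]
      exact dvd_sub (Dvd.intro _ rfl) hS1
    rcases (primeX0.2.2 _ _ hd) with h1 | h1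
    · exact h1
    · exact absurd (primeX0.dvd_of_dvd_pow h1) not_X0_dvd_X1
  choose g hg using hdvd
  refine ⟨g, ?_⟩
  have hfg : f = (X 0 : R2) • g := by
    funext m
    rw [Pi.smul_apply, smul_eq_mul, ← hg m]
  have h2 : (X 0 : R2) • stairDiff n a b g = (X 0 : R2) • x := by
    rw [← stairDiff_smul, ← hfg, hf]
  funext k
  have := congrFun h2 k
  rw [Pi.smul_apply, Pi.smul_apply, smul_eq_mul, smul_eq_mul] at this
  exact mul_left_cancel₀ (X_ne_zero 0) this

lemma stepV (n : ℕ) (a b : Fin n → ℕ) (hb : ∀ i, 0 < b i)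
    (x : Fin (n + 1) → R2)
    (hx : (X 1 : R2) • x ∈ Set.range (stairDiff n a b)) :
    x ∈ Set.range (stairDiff n a b) := by
  obtain ⟨f, hf⟩ := hx
  have hdvd : ∀ m : Fin n, (X 1 : R2) ∣ f m := by
    intro m
    have h := congrFun hf m.castSucc
    rw [stairDiff_apply] at h
    have hS1 : (∑ i : Fin n, if m.castSucc = i.castSucc then f i * X 0 ^ a i else 0)
        = f m * X 0 ^ a m := by
      rw [Finset.sum_eq_single m]
      · rw [if_pos rfl]
      · intro i _ hi
        rw [if_neg (fun hh => hi (Fin.castSucc_injective _ hh.symm))]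
      · simp
    have hS2 : (X 1 : R2) ∣ ∑ i : Fin n, if m.castSucc = i.succ then f i * X 1 ^ b i else 0 :=
      Finset.dvd_sum fun i _ => by
        split
        · exact ((dvd_pow_self (X 1 : R2) (hb i).ne')).mul_left _
        · exact dvd_zero _
    have hd : (X 1 : R2) ∣ f m * X 0 ^ a m := by
      have heq : f m * X 0 ^ a m =
          (X 1 : R2) * x m.castSucc -
            (∑ i : Fin n, if m.castSucc = i.succ then f i * X 1 ^ b i else 0) := by
        rw [hS1] at h
        simp only [Pi.smul_apply, smul_eq_mul] at h
        rw [← h]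
        ring
      rw [heq]
      exact dvd_sub (Dvd.intro _ rfl) hS2
    rcases (primeX1.2.2 _ _ hd) with h1 | h1
    · exact h1
    · exact absurd (primeX1.dvd_of_dvd_pow h1) not_X1_dvd_X0
  choose g hg using hdvd
  refine ⟨g, ?_⟩
  have hfg : f = (X 1 : R2) • g := by
    funext m
    rw [Pi.smul_apply, smul_eq_mul, ← hg m]
  have h2 : (X 1 : R2) • stairDiff n a b g = (X 1 : R2) • x := by
    rw [← stairDiff_smul, ← hfg, hf]
  funext k
  have := congrFun h2 k
  rw [Pi.smul_apply, Pi.smul_apply, smul_eq_mul, smul_eq_mul] at this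
  exact mul_left_cancel₀ (X_ne_zero 1) this

lemma stepUpow (n : ℕ) (a b : Fin n → ℕ) (ha : ∀ i, 0 < a i) (i : ℕ) :
    ∀ x : Fin (n + 1) → R2, ((X 0 : R2) ^ i) • x ∈ Set.range (stairDiff n a b) →
      x ∈ Set.range (stairDiff n a b) := by
  induction i with
  | zero => intro x hx; simpa using hx
  | succ i ih =>
    intro x hx
    have : (X 0 : R2) • (((X 0 : R2) ^ i) • x) ∈ Set.range (stairDiff n a b) := by
      rwa [smul_smul, ← pow_succ']
    exact ih x (stepU n a b ha _ this)

lemma stepVpow (n : ℕ) (a b : Fin n → ℕ) (hb : ∀ i, 0 < b i) (j : ℕ) :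
    ∀ x : Fin (n + 1) → R2, ((X 1 : R2) ^ j) • x ∈ Set.range (stairDiff n a b) →
      x ∈ Set.range (stairDiff n a b) := by
  induction j with
  | zero => intro x hx; simpa using hx
  | succ j ih =>
    intro x hx
    have : (X 1 : R2) • (((X 1 : R2) ^ j) • x) ∈ Set.range (stairDiff n a b) := by
      rwa [smul_smul, ← pow_succ']
    exact ih x (stepV n a b hb _ this)

/-- the homology `H = C₀ / im ∂` of a positive staircase complex
is torsion-free: if a non-zero monomial `U^i V^j` multiplies a class `[x]` to
zero in `H` (i.e. `U^i V^j • x ∈ im ∂`), then `[x] = 0` (i.e. `x ∈ im ∂`). -/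
theorem staircase_homology_torsionFree (n : ℕ) (a b : Fin n → ℕ)
    (ha : ∀ i, 0 < a i) (hb : ∀ i, 0 < b i)
    (x : Fin (n + 1) → R2) (i j : ℕ)
    (hx : (X 0 ^ i * X 1 ^ j : R2) • x ∈ Set.range (stairDiff n a b)) :
    x ∈ Set.range (stairDiff n a b) := by
  have h1 : ((X 0 : R2) ^ i) • (((X 1 : R2) ^ j) • x) ∈ Set.range (stairDiff n a b) := by
    rwa [smul_smul]
  exact stepVpow n a b hb j x (stepUpow n a b ha i _ h1)
end

section
/- Let C = (C_1 → C_0) and D = (D_1 → D_0) be positive staircase complexes over R = F_2[U,V]. Then their tensor product E = C ⊗_R D, with filtration levels E_2 = C_1⊗D_1, E_1 = (C_1⊗D_0) ⊕ (C_0⊗D_1), E_0 = C_0⊗D_0, is exact: the sequence 0 → E_2 → E_1 → E_0 is exact, i.e., the map E_2 → E_1 is injective and ker(E_1 → E_0) = im(E_2 → E_1). -/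
open MvPolynomial

/-- The map `E₂ = C₁ ⊗ D₁ → E₁ = (C₁ ⊗ D₀) ⊕ (C₀ ⊗ D₁)` of the tensor product
of two staircase complexes `C = (C₁ → C₀)`, `D = (D₁ → D₀)` (over `𝔽₂`, so no
signs), where free modules are identified with function spaces on products of
basis index sets. -/
noncomputable def tensorD2 (n m : ℕ) (a b : Fin n → ℕ) (c d : Fin m → ℕ) :
    (Fin n × Fin m → R2) →
      ((Fin n × Fin (m + 1) → R2) × (Fin (n + 1) × Fin m → R2)) := fun g =>
  (fun p => stairDiff m c d (fun j => g (p.1, j)) p.2,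
   fun p => stairDiff n a b (fun i => g (i, p.2)) p.1)

/-- The map `E₁ = (C₁ ⊗ D₀) ⊕ (C₀ ⊗ D₁) → E₀ = C₀ ⊗ D₀`. -/
noncomputable def tensorD1 (n m : ℕ) (a b : Fin n → ℕ) (c d : Fin m → ℕ) :
    ((Fin n × Fin (m + 1) → R2) × (Fin (n + 1) × Fin m → R2)) →
      (Fin (n + 1) × Fin (m + 1) → R2) := fun h p =>
  stairDiff n a b (fun i => h.1 (i, p.2)) p.1 +
    stairDiff m c d (fun j => h.2 (p.1, j)) p.2

namespace StairAux

lemma prime_X0 : Prime (X 0 : R2) := by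
  have h : Prime (Polynomial.X : Polynomial (MvPolynomial (Fin 1) (ZMod 2))) :=
    Polynomial.prime_X
  have : (MvPolynomial.finSuccEquiv (ZMod 2) 1) (X 0) = Polynomial.X := by
    simp [MvPolynomial.finSuccEquiv_X_zero]
  rw [← this] at h
  exact (MulEquiv.prime_iff (MvPolynomial.finSuccEquiv (ZMod 2) 1)).mp h

lemma char2 (r : R2) : r + r = 0 := CharTwo.add_self_eq_zero r

lemma add_eq_zero {r s : R2} (h : r + s = 0) : r = s := by
  have := congrArg (· + s) h
  simpa [add_assoc, char2] using this

variable {n : ℕ} {a b : Fin n → ℕ}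

lemma sd_apply_castSucc (f : Fin n → R2) (i : Fin n) :
    stairDiff n a b f i.castSucc =
      X 0 ^ a i * f i +
        (if h : 0 < (i : ℕ) then
          X 1 ^ b ⟨(i : ℕ) - 1, lt_of_le_of_lt (Nat.pred_le _) i.isLt⟩ *
            f ⟨(i : ℕ) - 1, lt_of_le_of_lt (Nat.pred_le _) i.isLt⟩ else 0) := by
  simp only [stairDiff, Finset.sum_apply, Pi.add_apply, Pi.smul_apply, smul_eq_mul, mul_add]
  rw [Finset.sum_add_distrib]
  congr 1
  · rw [Finset.sum_eq_single i]
    · simp [mul_comm]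
    · intro j _ hj
      rw [Pi.single_eq_of_ne (fun hcon => hj (Fin.castSucc_injective _ hcon).symm), mul_zero]
    · simp
  · by_cases h : 0 < (i : ℕ)
    · rw [dif_pos h]
      set i' : Fin n := ⟨(i : ℕ) - 1, lt_of_le_of_lt (Nat.pred_le _) i.isLt⟩ with hi'
      have hsucc : i'.succ = i.castSucc := by
        ext
        simp [hi', Nat.sub_add_cancel h]
      rw [Finset.sum_eq_single i']
      · rw [hsucc, Pi.single_eq_same, mul_comm]
      · intro j _ hj
        rw [Pi.single_eq_of_ne, mul_zero]
        rw [← hsucc]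
        intro hcon
        exact hj (Fin.succ_injective _ hcon).symm
      · simp
    · rw [dif_neg h]
      have hi0 : (i : ℕ) = 0 := Nat.eq_zero_of_not_pos h
      apply Finset.sum_eq_zero
      intro j _
      rw [Pi.single_eq_of_ne, mul_zero]
      intro hcon
      have : (i : ℕ) = (j : ℕ) + 1 := by simpa [Fin.ext_iff] using hcon
      omega

lemma sd_apply_succ (f : Fin n → R2) (i : Fin n) :
    stairDiff n a b f i.succ =
      (if h : (i : ℕ) + 1 < n then X 0 ^ a ⟨(i : ℕ) + 1, h⟩ * f ⟨(i : ℕ) + 1, h⟩ else 0) +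
        X 1 ^ b i * f i := by
  simp only [stairDiff, Finset.sum_apply, Pi.add_apply, Pi.smul_apply, smul_eq_mul, mul_add]
  rw [Finset.sum_add_distrib]
  congr 1
  · by_cases h : (i : ℕ) + 1 < n
    · rw [dif_pos h]
      set i' : Fin n := ⟨(i : ℕ) + 1, h⟩ with hi'
      have hcs : i'.castSucc = i.succ := by ext; simp [hi']
      rw [Finset.sum_eq_single i']
      · rw [hcs, Pi.single_eq_same, mul_comm]
      · intro j _ hj
        rw [Pi.single_eq_of_ne, mul_zero]
        rw [← hcs]
        intro hcon
        exact hj (Fin.castSucc_injective _ hcon).symm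
      · simp
    · rw [dif_neg h]
      apply Finset.sum_eq_zero
      intro j _
      rw [Pi.single_eq_of_ne, mul_zero]
      intro hcon
      have : (i : ℕ) + 1 = (j : ℕ) := by simpa [Fin.ext_iff] using hcon
      have := j.isLt
      omega
  · rw [Finset.sum_eq_single i]
    · simp [mul_comm]
    · intro j _ hj
      rw [Pi.single_eq_of_ne (fun hcon => hj (Fin.succ_injective _ hcon).symm), mul_zero]
    · simp


lemma sd_add (f f' : Fin n → R2) :
    stairDiff n a b (f + f') = stairDiff n a b f + stairDiff n a b f' := by
  simp only [stairDiff, Pi.add_apply, add_smul]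
  rw [Finset.sum_add_distrib]

lemma sd_add' (f f' : Fin n → R2) :
    stairDiff n a b (fun i => f i + f' i) = stairDiff n a b f + stairDiff n a b f' :=
  sd_add f f'

lemma sd_smul (r : R2) (f : Fin n → R2) :
    stairDiff n a b (fun i => r * f i) = fun k => r * stairDiff n a b f k := by
  funext k
  simp only [stairDiff, Finset.sum_apply, Pi.smul_apply, smul_eq_mul, Finset.mul_sum]
  exact Finset.sum_congr rfl fun i _ => by ring

lemma sd_eq_zero {f : Fin n → R2} (h : stairDiff n a b f = 0) : f = 0 := by
  have key : ∀ N : ℕ, ∀ k : Fin n, (k : ℕ) ≤ N → f k = 0 := by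
    intro N
    induction N with
    | zero =>
      intro k hk
      have h0 := congrFun h k.castSucc
      rw [sd_apply_castSucc] at h0
      rw [dif_neg (by omega)] at h0
      simp only [Pi.zero_apply, add_zero] at h0
      rcases mul_eq_zero.mp h0 with h1 | h1
      · exact absurd h1 (pow_ne_zero _ (MvPolynomial.X_ne_zero 0))
      · exact h1
    | succ N ih =>
      intro k hk
      have h0 := congrFun h k.castSucc
      rw [sd_apply_castSucc] at h0
      simp only [Pi.zero_apply] at h0
      by_cases hpos : 0 < (k : ℕ)
      · rw [dif_pos hpos] at h0
        rw [ih ⟨(k : ℕ) - 1, _⟩ (by simp; omega), mul_zero, add_zero] at h0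
        rcases mul_eq_zero.mp h0 with h1 | h1
        · exact absurd h1 (pow_ne_zero _ (MvPolynomial.X_ne_zero 0))
        · exact h1
      · rw [dif_neg hpos, add_zero] at h0
        rcases mul_eq_zero.mp h0 with h1 | h1
        · exact absurd h1 (pow_ne_zero _ (MvPolynomial.X_ne_zero 0))
        · exact h1
  funext k
  exact key (k : ℕ) k le_rfl

lemma sd_inj {f f' : Fin n → R2} (h : stairDiff n a b f = stairDiff n a b f') : f = f' := by
  have hz : stairDiff n a b (f + f') = 0 := by
    rw [sd_add, h]
    funext k
    exact char2 _
  have := sd_eq_zero hz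
  funext k
  have := congrFun this k
  simp only [Pi.add_apply, Pi.zero_apply] at this
  exact add_eq_zero this

lemma X0_not_dvd_X1 : ¬ (X 0 : R2) ∣ X 1 := by
  intro h
  rw [MvPolynomial.X_dvd_X] at h
  exact absurd h (by decide)

lemma range_add {x y : Fin (n + 1) → R2}
    (hx : x ∈ Set.range (stairDiff n a b)) (hy : y ∈ Set.range (stairDiff n a b)) :
    x + y ∈ Set.range (stairDiff n a b) := by
  obtain ⟨w, hw⟩ := hx
  obtain ⟨w', hw'⟩ := hy
  exact ⟨w + w', by rw [sd_add, hw, hw']⟩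

lemma range_smul (r : R2) {x : Fin (n + 1) → R2}
    (hx : x ∈ Set.range (stairDiff n a b)) :
    (fun k => r * x k) ∈ Set.range (stairDiff n a b) := by
  obtain ⟨w, hw⟩ := hx
  exact ⟨fun i => r * w i, by rw [sd_smul]; funext k; rw [hw]⟩

lemma sat (ha : ∀ i, 0 < a i) (z : Fin (n + 1) → R2)
    (hz : (fun k => X 0 * z k) ∈ Set.range (stairDiff n a b)) :
    z ∈ Set.range (stairDiff n a b) := by
  obtain ⟨w, hw⟩ := hz
  have hdvd : ∀ i : Fin n, (X 0 : R2) ∣ w i := by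
    intro i
    have h0 := congrFun hw i.succ
    rw [sd_apply_succ] at h0
    have hU : (X 0 : R2) ∣
        (if h : (i : ℕ) + 1 < n then X 0 ^ a ⟨(i : ℕ) + 1, h⟩ * w ⟨(i : ℕ) + 1, h⟩ else 0) := by
      by_cases h : (i : ℕ) + 1 < n
      · rw [dif_pos h]
        exact dvd_mul_of_dvd_left (dvd_pow_self (X 0) (ha _).ne') _
      · rw [dif_neg h]; exact dvd_zero _
    have hVd : (X 0 : R2) ∣ X 1 ^ b i * w i := by
      have : (X 0 : R2) ∣ X 0 * z i.succ := dvd_mul_right _ _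
      rw [← h0] at this
      exact (dvd_add_right hU).mp this
    rcases prime_X0.dvd_mul.mp hVd with h1 | h1
    · exact absurd (prime_X0.dvd_of_dvd_pow h1) X0_not_dvd_X1
    · exact h1
  choose w' hw' using hdvd
  refine ⟨w', ?_⟩
  have h1 : stairDiff n a b (fun i => X 0 * w' i) = fun k => X 0 * z k := by
    have hweq : (fun i => X 0 * w' i) = w := funext fun i => (hw' i).symm
    rw [hweq, hw]
  rw [sd_smul] at h1
  funext k
  exact mul_left_cancel₀ (MvPolynomial.X_ne_zero 0) (congrFun h1 k)

lemma sat_pow (ha : ∀ i, 0 < a i) (t : ℕ) (z : Fin (n + 1) → R2)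
    (hz : (fun k => X 0 ^ t * z k) ∈ Set.range (stairDiff n a b)) :
    z ∈ Set.range (stairDiff n a b) := by
  induction t with
  | zero => simpa using hz
  | succ t ih =>
    apply ih
    apply sat ha
    have : (fun k => X 0 * (X 0 ^ t * z k)) = fun k => X 0 ^ (t + 1) * z k := by
      funext k; ring
    rw [this]
    exact hz


lemma comm {m : ℕ} {c d : Fin m → ℕ} (g : Fin n → Fin m → R2)
    (p : Fin (n + 1)) (q : Fin (m + 1)) :
    stairDiff n a b (fun i => stairDiff m c d (g i) q) p =
      stairDiff m c d (fun j => stairDiff n a b (fun i => g i j) p) q := by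
  simp only [stairDiff, Finset.sum_apply, Pi.smul_apply, Pi.add_apply, smul_eq_mul,
    Finset.sum_mul, Finset.mul_sum]
  rw [Finset.sum_comm]
  exact Finset.sum_congr rfl fun j _ => Finset.sum_congr rfl fun i _ => by ring

lemma key {m : ℕ} {c d : Fin m → ℕ} (hc : ∀ j, 0 < c j)
    (h1 : Fin n → Fin (m + 1) → R2)
    (H : ∀ p : Fin (n + 1), (fun q => stairDiff n a b (fun i => h1 i q) p)
      ∈ Set.range (stairDiff m c d)) :
    ∀ i, h1 i ∈ Set.range (stairDiff m c d) := by
  have main : ∀ N : ℕ, ∀ i : Fin n, (i : ℕ) ≤ N → h1 i ∈ Set.range (stairDiff m c d) := by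
    intro N
    induction N with
    | zero =>
      intro i hi
      have h0 := H i.castSucc
      have heq : (fun q => stairDiff n a b (fun i' => h1 i' q) i.castSucc)
          = fun q => X 0 ^ a i * h1 i q := by
        funext q
        rw [sd_apply_castSucc, dif_neg (by omega), add_zero]
      rw [heq] at h0
      exact sat_pow hc _ _ h0
    | succ N ih =>
      intro i hi
      by_cases hpos : 0 < (i : ℕ)
      · have h0 := H i.castSucc
        set i' : Fin n := ⟨(i : ℕ) - 1, lt_of_le_of_lt (Nat.pred_le _) i.isLt⟩ with hi'
        have hprev := ih i' (by simp [hi']; omega)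
        have heq : (fun q => stairDiff n a b (fun i'' => h1 i'' q) i.castSucc)
            = fun q => X 0 ^ a i * h1 i q + X 1 ^ b i' * h1 i' q := by
          funext q
          rw [sd_apply_castSucc, dif_pos hpos]
        rw [heq] at h0
        have hv : (fun q => X 1 ^ b i' * h1 i' q) ∈ Set.range (stairDiff m c d) :=
          range_smul _ hprev
        have hx : (fun q => X 0 ^ a i * h1 i q) ∈ Set.range (stairDiff m c d) := by
          have hsum := range_add h0 hv
          have heq2 : ((fun q => X 0 ^ a i * h1 i q + X 1 ^ b i' * h1 i' q)
              + fun q => X 1 ^ b i' * h1 i' q) = fun q => X 0 ^ a i * h1 i q := by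
            funext q
            simp only [Pi.add_apply]
            rw [add_assoc, char2, add_zero]
          rwa [heq2] at hsum
        exact sat_pow hc _ _ hx
      · have h0 := H i.castSucc
        have heq : (fun q => stairDiff n a b (fun i' => h1 i' q) i.castSucc)
            = fun q => X 0 ^ a i * h1 i q := by
          funext q
          rw [sd_apply_castSucc, dif_neg hpos, add_zero]
        rw [heq] at h0
        exact sat_pow hc _ _ h0
  exact fun i => main (i : ℕ) i le_rfl

end StairAux

/-- the tensor product of two positive staircase complexes is
exact: `0 → E₂ → E₁ → E₀` is exact, i.e. `E₂ → E₁` is injective, the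
composite `E₂ → E₁ → E₀` vanishes, and `ker(E₁ → E₀) = im(E₂ → E₁)`. -/
theorem tensor_staircase_exact (n m : ℕ) (a b : Fin n → ℕ) (c d : Fin m → ℕ)
    (ha : ∀ i, 0 < a i) (hb : ∀ i, 0 < b i)
    (hc : ∀ j, 0 < c j) (hd : ∀ j, 0 < d j) :
    Function.Injective (tensorD2 n m a b c d) ∧
    (∀ g, tensorD1 n m a b c d (tensorD2 n m a b c d g) = 0) ∧
    (∀ h, tensorD1 n m a b c d h = 0 → h ∈ Set.range (tensorD2 n m a b c d)) := by
  classical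
  refine ⟨?_, ?_, ?_⟩
  · intro g g' hgg
    have h2 := congrArg Prod.snd hgg
    simp only [tensorD2] at h2
    funext ij
    obtain ⟨i, j⟩ := ij
    have hcol : (fun i' => g (i', j)) = fun i' => g' (i', j) := by
      apply StairAux.sd_inj (a := a) (b := b)
      funext p
      exact congrFun h2 (p, j)
    exact congrFun hcol i
  · intro g
    funext pq
    obtain ⟨p, q⟩ := pq
    simp only [tensorD1, tensorD2, Pi.zero_apply]
    rw [StairAux.comm (fun i j => g (i, j)) p q]
    exact StairAux.char2 _
  · intro h hker
    have hker' : ∀ (p : Fin (n + 1)) (q : Fin (m + 1)),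
        stairDiff n a b (fun i => h.1 (i, q)) p
          = stairDiff m c d (fun j => h.2 (p, j)) q := by
      intro p q
      have hthis := congrFun hker (p, q)
      simp only [tensorD1, Pi.zero_apply] at hthis
      exact StairAux.add_eq_zero hthis
    have H : ∀ p : Fin (n + 1), (fun q => stairDiff n a b (fun i => h.1 (i, q)) p)
        ∈ Set.range (stairDiff m c d) :=
      fun p => ⟨fun j => h.2 (p, j), by funext q; exact (hker' p q).symm⟩
    have hrows := StairAux.key hc (fun i q => h.1 (i, q)) H
    choose w hw using hrows
    refine ⟨fun ij => w ij.1 ij.2, ?_⟩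
    have comp1 : (tensorD2 n m a b c d fun ij => w ij.1 ij.2).1 = h.1 := by
      funext iq
      obtain ⟨i, q⟩ := iq
      show stairDiff m c d (fun j => w i j) q = h.1 (i, q)
      have hthis := congrFun (hw i) q
      simpa using hthis
    have comp2 : (tensorD2 n m a b c d fun ij => w ij.1 ij.2).2 = h.2 := by
      funext pj
      obtain ⟨p, j⟩ := pj
      show stairDiff n a b (fun i => w i j) p = h.2 (p, j)
      have hrow : (fun j => stairDiff n a b (fun i => w i j) p) = fun j => h.2 (p, j) := by
        apply StairAux.sd_inj (a := c) (b := d)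
        funext q
        rw [← StairAux.comm w p q]
        have hcols : (fun i => stairDiff m c d (w i) q) = fun i => h.1 (i, q) := by
          funext i
          rw [hw i]
        rw [hcols, hker' p q]
      exact congrFun hrow j
    exact Prod.ext comp1 comp2
end
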